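/- Let χ be a Dirichlet character mod k induced by a primitive character χ* mod r, and let m be an integer with (m,k)=1. Then the Gauss-type sum c_χ(m) = Σ_{h=1}^{k} χ(h)e(hm/k) satisfies c_χ(m) = conj(χ*)(m)·μ(k/r)·χ*(k/r)·τ(χ*). -/

import Mathlib

open Complex DirichletCharacter

/-- The Gauss-type sum c_χ(m) = Σ_{h=1}^{k} χ(h)e(hm/k). -/
noncomputable def cSum {k : ℕ} (χ : DirichletCharacter ℂ k) (m : ℤ) : ℂ :=
  ∑ h ∈ Finset.range k, χ (h : ZMod k) *
    Complex.exp (2 * Real.pi * Complex.I * h * m / k)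

private lemma twoPiI_ne : (2 * (Real.pi : ℂ) * Complex.I) ≠ 0 := by
  simp [Real.pi_ne_zero, Complex.I_ne_zero]

/-- Geometric sum of `s`-th roots of unity vanishes for `s ≥ 2`. -/
private lemma geom_exp_zero {s : ℕ} (hs : 2 ≤ s) :
    ∑ v ∈ Finset.range s, Complex.exp (2 * Real.pi * Complex.I * v / s) = 0 := by
  have hs0 : (s : ℂ) ≠ 0 := Nat.cast_ne_zero.2 (by omega)
  set ζ := Complex.exp (2 * Real.pi * Complex.I / s) with hζdef
  have hζ : ζ ≠ 1 := by
    intro hone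
    rw [hζdef, Complex.exp_eq_one_iff] at hone
    obtain ⟨n, hn⟩ := hone
    have key : (2 * (Real.pi : ℂ) * Complex.I) * 1
        = (2 * (Real.pi : ℂ) * Complex.I) * (n * s) := by
      field_simp at hn
      linear_combination (2 * (Real.pi : ℂ) * Complex.I) * hn
    have h1 : (1 : ℂ) = (n : ℂ) * s := mul_left_cancel₀ twoPiI_ne key
    have h2 : ((1 : ℤ) : ℂ) = ((n * s : ℤ) : ℂ) := by push_cast; linear_combination h1
    have h3 : (1 : ℤ) = n * s := Int.cast_injective h2
    have h4 : (s : ℤ) ∣ 1 := ⟨n, by linarith⟩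
    have h5 := Int.le_of_dvd one_pos h4
    have : (2 : ℤ) ≤ s := by exact_mod_cast hs
    linarith
  have hpow : ζ ^ s = 1 := by
    rw [hζdef, ← Complex.exp_nat_mul,
      show (s : ℂ) * (2 * Real.pi * Complex.I / s) = 2 * Real.pi * Complex.I by field_simp,
      Complex.exp_two_pi_mul_I]
  calc ∑ v ∈ Finset.range s, Complex.exp (2 * Real.pi * Complex.I * v / s)
      = ∑ v ∈ Finset.range s, ζ ^ v := by
        refine Finset.sum_congr rfl fun v _ => ?_
        rw [hζdef, ← Complex.exp_nat_mul]
        congr 1; ring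
    _ = (ζ ^ s - 1) / (ζ - 1) := geom_sum_eq hζ s
    _ = 0 := by rw [hpow]; simp

/-- Split a sum over `range (r*s)` into a double sum. -/
private lemma sum_range_mul {M : Type*} [AddCommMonoid M] (f : ℕ → M) {r : ℕ} (s : ℕ)
    (hr : 0 < r) :
    ∑ q ∈ Finset.range (r * s), f q
      = ∑ u ∈ Finset.range r, ∑ v ∈ Finset.range s, f (u + r * v) := by
  rw [← Finset.sum_product']
  refine (Finset.sum_nbij' (fun p : ℕ × ℕ => p.1 + r * p.2) (fun q => (q % r, q / r))
    ?_ ?_ ?_ ?_ ?_).symm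
  · rintro ⟨u, v⟩ hp
    rw [Finset.mem_product, Finset.mem_range, Finset.mem_range] at hp
    rw [Finset.mem_range]
    have h1 : r * v + r ≤ r * s := by
      rw [← Nat.mul_succ]
      exact Nat.mul_le_mul_left r hp.2
    linarith [hp.1]
  · intro q hq
    rw [Finset.mem_range] at hq
    rw [Finset.mem_product, Finset.mem_range, Finset.mem_range]
    exact ⟨Nat.mod_lt _ hr, (Nat.div_lt_iff_lt_mul hr).2 (by rwa [mul_comm])⟩
  · rintro ⟨u, v⟩ hp
    rw [Finset.mem_product, Finset.mem_range, Finset.mem_range] at hp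
    have h1 : (u + r * v) % r = u := by
      rw [Nat.add_mul_mod_self_left, Nat.mod_eq_of_lt hp.1]
    have h2 : (u + r * v) / r = v := by
      rw [Nat.add_mul_div_left _ _ hr, Nat.div_eq_of_lt hp.1, zero_add]
    simp [h1, h2]
  · intro q _
    exact Nat.mod_add_div q r
  · rintro ⟨u, v⟩ _
    rfl

/-- Reindex a sum over multiples of `d` below `k`. -/
private lemma sum_filter_dvd {M : Type*} [AddCommMonoid M] (f : ℕ → M) {d k : ℕ}
    (hdk : d ∣ k) (hd : 0 < d) :
    ∑ h ∈ (Finset.range k).filter (d ∣ ·), f h = ∑ q ∈ Finset.range (k / d), f (d * q) := by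
  refine Finset.sum_nbij' (fun h => h / d) (fun q => d * q) ?_ ?_ ?_ ?_ ?_
  · intro h hh
    rw [Finset.mem_filter, Finset.mem_range] at hh
    rw [Finset.mem_range]
    exact Nat.div_lt_div_of_lt_of_dvd hdk hh.1
  · intro q hq
    rw [Finset.mem_range] at hq
    rw [Finset.mem_filter, Finset.mem_range]
    refine ⟨?_, dvd_mul_right d q⟩
    calc d * q < d * (k / d) := by exact (Nat.mul_lt_mul_left hd).2 hq
      _ ≤ k := Nat.mul_div_le k d
  · intro h hh
    rw [Finset.mem_filter] at hh
    exact Nat.mul_div_cancel' hh.2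
  · intro q _
    exact Nat.mul_div_cancel_left q hd
  · intro h hh
    rw [Finset.mem_filter] at hh
    rw [Nat.mul_div_cancel' hh.2]

private lemma sum_moebius_divisors (n : ℕ) :
    ∑ d ∈ n.divisors, ArithmeticFunction.moebius d = if n = 1 then 1 else 0 := by
  rw [← ArithmeticFunction.coe_mul_zeta_apply, ArithmeticFunction.moebius_mul_coe_zeta,
    ArithmeticFunction.one_apply]

/-- auxiliary Gauss-type sum: `∑_{q<n} χ(q) e(q/n)` with `χ` a character mod `r`. -/
private noncomputable def auxS {r : ℕ} (χ : DirichletCharacter ℂ r) (n : ℕ) : ℂ :=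
  ∑ q ∈ Finset.range n, χ (q : ZMod r) * Complex.exp (2 * Real.pi * Complex.I * q / n)

private lemma auxS_eq_zero {r : ℕ} [NeZero r] (χ : DirichletCharacter ℂ r) {n : ℕ}
    (hn : n ≠ 0) (hrn : r ∣ n) (hne : n ≠ r) : auxS χ n = 0 := by
  obtain ⟨s, rfl⟩ := hrn
  have hr : 0 < r := Nat.pos_of_ne_zero (NeZero.ne r)
  have hs : 2 ≤ s := by
    have h0 : s ≠ 0 := by rintro rfl; exact hn (mul_zero r)
    have h1 : s ≠ 1 := by rintro rfl; exact hne (mul_one r)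
    omega
  have hs0 : (s : ℂ) ≠ 0 := Nat.cast_ne_zero.2 (by omega)
  have hr0 : (r : ℂ) ≠ 0 := Nat.cast_ne_zero.2 (by omega)
  rw [auxS, sum_range_mul _ s hr]
  have key : ∀ u ∈ Finset.range r,
      (∑ v ∈ Finset.range s, χ ((u + r * v : ℕ) : ZMod r) *
        Complex.exp (2 * Real.pi * Complex.I * ((u + r * v : ℕ) : ℂ) / ((r * s : ℕ) : ℂ)))
      = (χ ((u : ℕ) : ZMod r) *
          Complex.exp (2 * Real.pi * Complex.I * ((u : ℕ) : ℂ) / ((r * s : ℕ) : ℂ))) *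
        ∑ v ∈ Finset.range s, Complex.exp (2 * Real.pi * Complex.I * ((v : ℕ) : ℂ) / (s : ℂ)) := by
    intro u _
    rw [Finset.mul_sum]
    refine Finset.sum_congr rfl fun v _ => ?_
    have hcast : ((u + r * v : ℕ) : ZMod r) = ((u : ℕ) : ZMod r) := by
      push_cast
      simp [ZMod.natCast_self]
    have harg : 2 * (Real.pi : ℂ) * Complex.I * ((u + r * v : ℕ) : ℂ) / ((r * s : ℕ) : ℂ)
        = 2 * Real.pi * Complex.I * ((u : ℕ) : ℂ) / ((r * s : ℕ) : ℂ)
          + 2 * Real.pi * Complex.I * ((v : ℕ) : ℂ) / (s : ℂ) := by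
      push_cast
      field_simp
    rw [hcast, harg, Complex.exp_add]
    ring
  rw [Finset.sum_congr rfl key, ← Finset.sum_mul, geom_exp_zero hs, mul_zero]

private lemma tau_eq {r k : ℕ} (hk : k ≠ 0) (hrk : r ∣ k)
    (χstar : DirichletCharacter ℂ r) :
    auxS (changeLevel hrk χstar) k
      = (ArithmeticFunction.moebius (k / r) : ℂ) * χstar ((k / r : ℕ) : ZMod r)
        * auxS χstar r := by
  have hr : r ≠ 0 := by rintro rfl; exact hk (Nat.eq_zero_of_zero_dvd hrk)
  haveI : NeZero k := ⟨hk⟩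
  haveI : NeZero r := ⟨hr⟩
  -- Step 1: unfold the induced character
  have hchi : ∀ h : ℕ, (changeLevel hrk χstar) ((h : ℕ) : ZMod k)
      = (if Nat.Coprime h k then (1 : ℂ) else 0) * χstar ((h : ℕ) : ZMod r) := by
    intro h
    by_cases hco : Nat.Coprime h k
    · rw [if_pos hco, one_mul]
      obtain ⟨u, hu⟩ := (ZMod.isUnit_iff_coprime h k).2 hco
      rw [← hu, changeLevel_eq_cast_of_dvd χstar hrk u, hu, ZMod.cast_natCast hrk]
    · rw [if_neg hco, zero_mul]
      apply MulChar.map_nonunit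
      rw [ZMod.isUnit_iff_coprime]
      exact hco
  -- Step 2: Möbius indicator
  have hmoeb : ∀ h : ℕ, (if Nat.Coprime h k then (1 : ℂ) else 0)
      = ∑ d ∈ k.divisors.filter (· ∣ h), (ArithmeticFunction.moebius d : ℂ) := by
    intro h
    have hg : Nat.gcd h k ≠ 0 := fun hgz => hk (Nat.eq_zero_of_gcd_eq_zero_right hgz)
    have hdiv : (Nat.gcd h k).divisors = k.divisors.filter (· ∣ h) := by
      ext d
      simp only [Nat.mem_divisors, Finset.mem_filter, Nat.dvd_gcd_iff]
      constructor
      · rintro ⟨⟨h1, h2⟩, _⟩; exact ⟨⟨h2, hk⟩, h1⟩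
      · rintro ⟨⟨h2, _⟩, h1⟩; exact ⟨⟨h1, h2⟩, hg⟩
    rw [← hdiv]
    have h1 : (∑ d ∈ (Nat.gcd h k).divisors, (ArithmeticFunction.moebius d : ℂ))
        = ((∑ d ∈ (Nat.gcd h k).divisors, ArithmeticFunction.moebius d : ℤ) : ℂ) := by
      push_cast; rfl
    rw [h1, sum_moebius_divisors]
    unfold Nat.Coprime
    split_ifs <;> simp
  -- main computation
  have key : auxS (changeLevel hrk χstar) k
      = ∑ d ∈ k.divisors, ∑ q ∈ Finset.range (k / d),
          (ArithmeticFunction.moebius d : ℂ) * χstar ((d * q : ℕ) : ZMod r)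
            * Complex.exp (2 * Real.pi * Complex.I * (d * q) / k) := by
    rw [auxS]
    have step1 : ∀ h ∈ Finset.range k,
        (changeLevel hrk χstar) ((h : ℕ) : ZMod k)
          * Complex.exp (2 * Real.pi * Complex.I * h / k)
        = ∑ d ∈ k.divisors, (if d ∣ h then
            (ArithmeticFunction.moebius d : ℂ) * χstar ((h : ℕ) : ZMod r)
              * Complex.exp (2 * Real.pi * Complex.I * h / k) else 0) := by
      intro h _
      rw [hchi h, hmoeb h, Finset.sum_filter, Finset.sum_mul, Finset.sum_mul]
      refine Finset.sum_congr rfl fun d _ => ?_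
      split_ifs <;> ring
    rw [Finset.sum_congr rfl step1, Finset.sum_comm]
    refine Finset.sum_congr rfl fun d hd => ?_
    rw [Nat.mem_divisors] at hd
    have hd0 : 0 < d := Nat.pos_of_dvd_of_pos hd.1 (Nat.pos_of_ne_zero hk)
    rw [← Finset.sum_filter, sum_filter_dvd _ hd.1 hd0]
    refine Finset.sum_congr rfl fun q _ => ?_
    push_cast
    ring_nf
  rw [key]
  -- Step 3: identify each term
  have hterm : ∀ d ∈ k.divisors,
      (∑ q ∈ Finset.range (k / d),
          (ArithmeticFunction.moebius d : ℂ) * χstar ((d * q : ℕ) : ZMod r)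
            * Complex.exp (2 * Real.pi * Complex.I * (d * q) / k))
        = if d = k / r then
            (ArithmeticFunction.moebius (k / r) : ℂ) * χstar ((k / r : ℕ) : ZMod r)
              * auxS χstar r else 0 := by
    intro d hd
    rw [Nat.mem_divisors] at hd
    obtain ⟨e, hke⟩ := hd.1
    have hd0 : d ≠ 0 := by rintro rfl; exact hk (by simpa using hke)
    have he0 : e ≠ 0 := by rintro rfl; exact hk (by simpa using hke)
    have hkd : k / d = e := by rw [hke, Nat.mul_div_cancel_left e (Nat.pos_of_ne_zero hd0)]
    have hsum : (∑ q ∈ Finset.range (k / d),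
          (ArithmeticFunction.moebius d : ℂ) * χstar ((d * q : ℕ) : ZMod r)
            * Complex.exp (2 * Real.pi * Complex.I * (d * q) / k))
        = (ArithmeticFunction.moebius d : ℂ) * χstar ((d : ℕ) : ZMod r) * auxS χstar e := by
      rw [hkd, auxS, Finset.mul_sum]
      refine Finset.sum_congr rfl fun q hq => ?_
      have harg : 2 * (Real.pi : ℂ) * Complex.I * (d * q) / k
          = 2 * Real.pi * Complex.I * q / e := by
        have : (k : ℂ) = (d : ℂ) * e := by exact_mod_cast hke
        rw [this]
        have hd0' : (d : ℂ) ≠ 0 := Nat.cast_ne_zero.2 hd0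
        have he0' : (e : ℂ) ≠ 0 := Nat.cast_ne_zero.2 he0
        field_simp
      push_cast
      rw [harg, map_mul]
      ring
    rw [hsum]
    by_cases hdkr : d = k / r
    · rw [if_pos hdkr]
      subst hdkr
      rw [Nat.div_div_self hrk hk] at hkd
      rw [← hkd]
    · rw [if_neg hdkr]
      by_cases hco : Nat.Coprime d r
      · have hre : r ∣ e := (Nat.Coprime.dvd_of_dvd_mul_left (hco.symm)) (hke ▸ hrk)
        have hner : e ≠ r := by
          rintro rfl
          exact hdkr (by rw [hke, Nat.mul_div_cancel _ (Nat.pos_of_ne_zero he0)])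
        rw [auxS_eq_zero χstar he0 hre hner, mul_zero]
      · have : χstar ((d : ℕ) : ZMod r) = 0 := by
          apply MulChar.map_nonunit
          rw [ZMod.isUnit_iff_coprime]
          exact hco
        rw [this, mul_zero, zero_mul]
  rw [Finset.sum_congr rfl hterm, Finset.sum_ite_eq' k.divisors (k / r)]
  rw [if_pos (Nat.mem_divisors.2 ⟨Nat.div_dvd_of_dvd hrk, hk⟩)]

/-- If χ mod k is induced by the primitive character χ* mod r and (m,k) = 1, then
c_χ(m) = conj(χ*)(m)·μ(k/r)·χ*(k/r)·τ(χ*). -/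
theorem cSum_eq_of_induced_coprime {r k : ℕ} (hrk : r ∣ k)
    (χstar : DirichletCharacter ℂ r) (hprim : χstar.IsPrimitive)
    (χ : DirichletCharacter ℂ k) (hind : χ = changeLevel hrk χstar)
    (m : ℤ) (hm : IsCoprime m (k : ℤ)) :
    cSum χ m =
      (starRingEnd ℂ) (χstar ((m : ℤ) : ZMod r)) *
        (ArithmeticFunction.moebius (k / r) : ℂ) * χstar ((k / r : ℕ) : ZMod r) *
        cSum χstar 1 := by
  rcases eq_or_ne k 0 with rfl | hk
  · simp [cSum, Nat.zero_div]
  have hr : r ≠ 0 := by rintro rfl; exact hk (Nat.eq_zero_of_zero_dvd hrk)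
  haveI : NeZero k := ⟨hk⟩
  haveI : NeZero r := ⟨hr⟩
  -- convert `cSum` to a Gauss sum
  have hconv : ∀ j : ℤ, cSum χ j
      = gaussSum χ ((ZMod.stdAddChar (N := k)).mulShift ((j : ℤ) : ZMod k)) := by
    intro j
    rw [cSum, gaussSum]
    refine Finset.sum_nbij' (fun h : ℕ => ((h : ℕ) : ZMod k)) (fun a : ZMod k => a.val)
      ?_ ?_ ?_ ?_ ?_
    · intro h _; exact Finset.mem_univ _
    · intro a _; exact Finset.mem_range.2 (ZMod.val_lt a)
    · intro h hh; exact ZMod.val_cast_of_lt (Finset.mem_range.1 hh)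
    · intro a _; exact ZMod.natCast_zmod_val a
    · intro h _
      congr 1
      rw [AddChar.mulShift_apply]
      have hprod : ((j : ZMod k)) * ((h : ℕ) : ZMod k) = (((j * h : ℤ)) : ZMod k) := by
        push_cast; ring
      rw [hprod, ZMod.stdAddChar_coe]
      congr 1
      push_cast
      ring
  have h1e : ((1 : ℤ) : ZMod k) = 1 := by push_cast; rfl
  have hone : cSum χ 1 = gaussSum χ (ZMod.stdAddChar (N := k)) := by
    rw [hconv 1, h1e, AddChar.mulShift_one]
  obtain ⟨a, b, hab⟩ := hm
  have hmu : IsUnit ((m : ℤ) : ZMod k) := by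
    apply IsUnit.of_mul_eq_one ((a : ℤ) : ZMod k)
    have hcast := congrArg (fun z : ℤ => (z : ZMod k)) hab
    push_cast at hcast
    simp only [ZMod.natCast_self, mul_zero, add_zero] at hcast
    rw [← hcast]; ring
  obtain ⟨c, hc⟩ := hrk
  have hmr : IsUnit ((m : ℤ) : ZMod r) := by
    apply IsUnit.of_mul_eq_one ((a : ℤ) : ZMod r)
    have hcast := congrArg (fun z : ℤ => (z : ZMod r)) hab
    push_cast at hcast
    rw [hc] at hcast
    push_cast at hcast
    simp only [ZMod.natCast_self, zero_mul, mul_zero, add_zero] at hcast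
    rw [← hcast]; ring
  have hval : χ ((m : ℤ) : ZMod k) = χstar ((m : ℤ) : ZMod r) := by
    rw [← hmu.unit_spec, hind, changeLevel_eq_cast_of_dvd χstar ⟨c, hc⟩, hmu.unit_spec,
      ZMod.cast_intCast ⟨c, hc⟩]
  have hstar : (starRingEnd ℂ) (χstar ((m : ℤ) : ZMod r)) * χstar ((m : ℤ) : ZMod r) = 1 := by
    rw [← hmr.unit_spec]
    have hs1 : (starRingEnd ℂ) (χstar ↑hmr.unit) = (star χstar) ↑hmr.unit := rfl
    rw [hs1, MulChar.star_eq_inv]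
    calc χstar⁻¹ ↑hmr.unit * χstar ↑hmr.unit = (χstar⁻¹ * χstar) ↑hmr.unit := by
          rw [MulChar.coeToFun_mul, Pi.mul_apply]
      _ = (1 : MulChar (ZMod r) ℂ) ↑hmr.unit := by rw [MulChar.inv_mul]
      _ = 1 := MulChar.one_apply_coe _
  have hmain := gaussSum_mulShift χ (ZMod.stdAddChar (N := k)) hmu.unit
  rw [hmu.unit_spec] at hmain
  have h2 : cSum χ m = (starRingEnd ℂ) (χstar ((m : ℤ) : ZMod r)) * cSum χ 1 := by
    rw [hconv m, hone, ← hmain, hval, ← mul_assoc, hstar, one_mul]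
  have hA : cSum χ 1 = auxS (changeLevel ⟨c, hc⟩ χstar) k := by
    rw [cSum, auxS, hind]
    refine Finset.sum_congr rfl fun h _ => ?_
    congr 1
    push_cast
    ring
  have hB : cSum χstar 1 = auxS χstar r := by
    rw [cSum, auxS]
    refine Finset.sum_congr rfl fun h _ => ?_
    congr 1
    push_cast
    ring
  rw [h2, hA, tau_eq hk ⟨c, hc⟩ χstar, ← hB]
  ring
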